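/- Let c > 0 and let Z₁, Z₂, … be i.i.d. real random variables such that Zᵢ − Δ′ is 1-subgaussian for some constant Δ′ ≥ c. Let Sₙ = Z₁ + ⋯ + Zₙ. Then for every a > 0, P(∃ n ≥ 1 : Sₙ ≤ −a) ≤ exp(−2ca). -/

import Mathlib

open MeasureTheory ProbabilityTheory Real
open scoped ENNReal

/-- `W` is 1-subgaussian (mean-zero form): `E[exp(λW)] ≤ exp(λ²/2)` for all
`λ ∈ ℝ` (with the integrability of the moment generating function). -/
def IsOneSubgaussianMGF {Ω : Type*} [MeasurableSpace Ω] (μ : Measure Ω) (W : Ω → ℝ) : Prop :=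
  ∀ l : ℝ, Integrable (fun ω => Real.exp (l * W ω)) μ ∧
    (∫ ω, Real.exp (l * W ω) ∂μ) ≤ Real.exp (l ^ 2 / 2)

section Aux

variable {Ω : Type*} [m0 : MeasurableSpace Ω] {μ : Measure Ω} [IsProbabilityMeasure μ]

/-- Ville's inequality for "exp(-l Sₙ)" with each factor having mgf ≤ 1. -/
theorem ville_aux (Z : ℕ → Ω → ℝ) (hmeas : ∀ i, Measurable (Z i))
    (hindep : iIndepFun Z μ)
    (l : ℝ) (hl : 0 < l)
    (g : ℕ → Ω → ℝ) (hgdef : ∀ i, g i = fun ω => Real.exp (-l * Z i ω))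
    (hgint : ∀ i, Integrable (g i) μ)
    (hgbd : ∀ i, (∫ ω, g i ω ∂μ) ≤ 1)
    (ε : ℝ) (hε : 1 < ε) (n : ℕ) :
    μ {ω | ∃ k ≤ n, ε ≤ (∏ i ∈ Finset.range k, g i) ω} ≤ ENNReal.ofReal (1 / ε) := by
  classical
  have hεpos : 0 < ε := lt_trans one_pos hε
  set f : ℕ → Ω → ℝ := fun k => ∏ i ∈ Finset.range k, g i with hf
  have hgmeas : ∀ i, Measurable (g i) := fun i => by
    rw [hgdef]; exact (Real.measurable_exp.comp ((hmeas i).const_mul (-l)))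
  have hgpos : ∀ i ω, 0 < g i ω := fun i ω => by rw [hgdef]; exact Real.exp_pos _
  have hfpos : ∀ k ω, 0 < f k ω := fun k ω => by
    simp only [hf, Finset.prod_apply]
    exact Finset.prod_pos fun i _ => hgpos i ω
  -- filtration
  set 𝒢 : Filtration ℕ m0 :=
    { seq := fun n => ⨆ i ∈ {k | k < n}, MeasurableSpace.comap (Z i) inferInstance
      mono' := fun i j hij => biSup_mono fun k hk => lt_of_lt_of_le hk hij
      le' := fun n => iSup₂_le fun i _ => (hmeas i).comap_le } with h𝒢
  have hGmeasZ : ∀ i nn, i < nn → Measurable[𝒢 nn] (Z i) := fun i nn hi =>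
    (comap_measurable (Z i)).mono
      (le_biSup (fun k => MeasurableSpace.comap (Z k) inferInstance) hi) le_rfl
  have hadp : StronglyAdapted 𝒢 f := by
    intro k
    refine Measurable.stronglyMeasurable ?_
    simp only [hf]
    have : ∀ i ∈ Finset.range k, Measurable[𝒢 k] (g i) := fun i hi => by
      rw [hgdef]
      exact Real.measurable_exp.comp ((hGmeasZ i k (Finset.mem_range.mp hi)).const_mul (-l))
    rw [show (∏ i ∈ Finset.range k, g i) = fun a => ∏ i ∈ Finset.range k, g i a from
      funext fun a => Finset.prod_apply _ _ _]
    exact Finset.measurable_prod _ this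
  -- independence of g n from 𝒢 n
  have hIndep : ∀ nn, Indep (MeasurableSpace.comap (Z nn) inferInstance) (𝒢 nn) μ := by
    intro nn
    have h := indep_iSup_of_disjoint (fun k => (hmeas k).comap_le) hindep
      (S := {nn}) (T := {k | k < nn}) (by simp)
    rwa [iSup_singleton] at h
  -- integrability of f and bound on its integral
  have hfindep : ∀ k, IndepFun (f k) (g k) μ := fun k => by
    have hgind : iIndepFun g μ := by
      have := hindep.comp (fun i (x : ℝ) => Real.exp (-l * x))
        (fun i => Real.measurable_exp.comp (measurable_const_mul (-l)))
      convert this using 2 with i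
      rw [hgdef]; rfl
    exact hgind.indepFun_prod_range_succ hgmeas k
  have hfint : ∀ k, Integrable (f k) μ := by
    intro k
    induction k with
    | zero =>
      have h1 : Integrable (1 : Ω → ℝ) μ := integrable_const (1 : ℝ)
      simpa [hf] using h1
    | succ k ih =>
      have : f (k + 1) = f k * g k := by simp [hf, Finset.prod_range_succ]
      rw [this]
      exact (hfindep k).integrable_mul ih (hgint k)
  have hfbd : ∀ k, (∫ ω, f k ω ∂μ) ≤ 1 := by
    intro k
    induction k with
    | zero => simp [hf]
    | succ k ih =>
      have h1 : f (k + 1) = f k * g k := by simp [hf, Finset.prod_range_succ]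
      rw [h1]
      have h2 := (hfindep k).integral_mul_eq_mul_integral (hfint k).aestronglyMeasurable
        (hgint k).aestronglyMeasurable
      calc ∫ ω, (f k * g k) ω ∂μ = (∫ ω, f k ω ∂μ) * ∫ ω, g k ω ∂μ := h2
        _ ≤ 1 * 1 :=
            mul_le_mul ih (hgbd k) (integral_nonneg fun ω => (hgpos k ω).le) zero_le_one
        _ = 1 := one_mul 1
  -- the supermartingale property
  have hfmeas : ∀ k, Measurable (f k) := fun k => ((hadp k).measurable).mono (𝒢.le k) le_rfl
  have hsuper : Supermartingale f 𝒢 μ := by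
    refine supermartingale_nat hadp hfint fun k => ?_
    have h1 : f (k + 1) = f k * g k := by simp [hf, Finset.prod_range_succ]
    have hmul : μ[f (k + 1)|𝒢 k] =ᵐ[μ] f k * μ[g k|𝒢 k] := by
      rw [h1]
      exact condExp_mul_of_stronglyMeasurable_left (hadp k) (h1 ▸ hfint (k + 1)) (hgint k)
    have hgm1 : StronglyMeasurable[MeasurableSpace.comap (Z k) inferInstance] (g k) := by
      rw [hgdef]
      exact (Real.measurable_exp.comp
        ((comap_measurable (Z k)).const_mul (-l))).stronglyMeasurable
    have hce : μ[g k|𝒢 k] =ᵐ[μ] fun _ => ∫ ω, g k ω ∂μ :=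
      condExp_indep_eq (hmeas k).comap_le (𝒢.le k) hgm1 (hIndep k)
    filter_upwards [hmul, hce] with ω h1' h2'
    rw [h1', Pi.mul_apply, h2']
    calc f k ω * ∫ ω, g k ω ∂μ ≤ f k ω * 1 :=
          mul_le_mul_of_nonneg_left (hgbd k) (hfpos k ω).le
      _ = f k ω := mul_one _
  -- optional stopping at the hitting time of {ε ≤ ·}
  set τ : Ω → WithTop ℕ := fun ω => ((hittingBtwn f {y : ℝ | ε ≤ y} 0 n ω : ℕ) : WithTop ℕ)
    with hτdef
  have hτ : IsStoppingTime 𝒢 τ := hadp.adapted.isStoppingTime_hittingBtwn measurableSet_Ici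
  have hτle : ∀ ω, τ ω ≤ n := fun ω => WithTop.coe_le_coe.mpr (hittingBtwn_le ω)
  have hsv_int : Integrable (stoppedValue f τ) μ := by
    have h := (hsuper.neg.integrable_stoppedValue hτ hτle).neg
    have : stoppedValue f τ = fun ω => -(stoppedValue (-f) τ ω) := by
      funext ω; simp [stoppedValue]
    rw [this]; exact h
  have hsv_le : ∫ ω, stoppedValue f τ ω ∂μ ≤ 1 := by
    have h := hsuper.neg.expected_stoppedValue_mono (isStoppingTime_const 𝒢 0) hτ
      (fun ω => WithTop.coe_le_coe.mpr (Nat.zero_le _)) hτle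
    have e0 : stoppedValue (-f) (fun _ => ((0 : ℕ) : WithTop ℕ)) = fun ω => -(f 0 ω) := rfl
    have e1 : stoppedValue (-f) τ = fun ω => -(stoppedValue f τ ω) := rfl
    change ∫ x, -(f 0 x) ∂μ ≤ ∫ x, -(stoppedValue f τ x) ∂μ at h
    rw [integral_neg, integral_neg, neg_le_neg_iff] at h
    refine h.trans ?_
    have hf0 : (fun ω => f 0 ω) = fun _ : Ω => (1 : ℝ) := by funext ω; simp [hf]
    rw [hf0, integral_const]; simp
  -- Markov on the stopped value
  set A := {ω | ∃ k ≤ n, ε ≤ f k ω} with hA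
  have hAmeas : MeasurableSet A := by
    have hAe : A = ⋃ k ∈ Set.Iic n, {ω | ε ≤ f k ω} := by
      ext ω; simp [hA]
    rw [hAe]
    exact MeasurableSet.biUnion (Set.to_countable _) fun k _ =>
      measurableSet_le measurable_const (hfmeas k)
  have hAsv : ∀ ω ∈ A, ε ≤ stoppedValue f τ ω := by
    rintro ω ⟨k, hk, hεk⟩
    exact stoppedValue_hittingBtwn_mem ⟨k, Set.mem_Icc.mpr ⟨Nat.zero_le _, hk⟩, hεk⟩
  have hmarkov : ε * (μ A).toReal ≤ 1 := by
    have h1 := setIntegral_ge_of_const_le hAmeas (measure_ne_top μ A) hAsv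
      hsv_int.integrableOn
    refine le_trans (le_of_eq ((mul_comm _ _).trans (smul_eq_mul _ _).symm)) ?_
    refine h1.trans (le_trans (setIntegral_le_integral hsv_int ?_) hsv_le)
    exact Filter.Eventually.of_forall fun ω => (hfpos _ ω).le
  have hfin : μ A ≤ ENNReal.ofReal (1 / ε) := by
    rw [← ENNReal.ofReal_toReal (measure_ne_top μ A)]
    apply ENNReal.ofReal_le_ofReal
    rw [le_div_iff₀ hεpos]
    linarith [hmarkov]
  exact hfin

end Aux

set_option maxHeartbeats 1000000 in
/-- Let `c > 0` and let `Z₁, Z₂, …` be i.i.d. with `Zᵢ − Δ′` 1-subgaussian for some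
constant `Δ′ ≥ c`, and `Sₙ = Z₁ + ⋯ + Zₙ`.  Then for every `a > 0`,
`P(∃ n ≥ 1 : Sₙ ≤ −a) ≤ exp(−2ca)`. -/
theorem stmt13 {Ω : Type*} [MeasurableSpace Ω] (μ : Measure Ω) [IsProbabilityMeasure μ]
    (Z : ℕ → Ω → ℝ) (hmeas : ∀ i, Measurable (Z i))
    (hindep : iIndepFun Z μ)
    (hident : ∀ i, IdentDistrib (Z i) (Z 0) μ μ)
    (c : ℝ) (hc : 0 < c)
    (Δ' : ℝ) (hΔ' : c ≤ Δ')
    (hsub : ∀ i, IsOneSubgaussianMGF μ (fun ω => Z i ω - Δ'))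
    (a : ℝ) (ha : 0 < a) :
    μ {ω | ∃ n : ℕ, 1 ≤ n ∧ (∑ i ∈ Finset.range n, Z i ω) ≤ -a} ≤
      ENNReal.ofReal (Real.exp (-(2 * c * a))) := by
  set l : ℝ := 2 * c with hldef
  have hl : 0 < l := by positivity
  set g : ℕ → Ω → ℝ := fun i ω => Real.exp (-l * Z i ω) with hgdef
  have hgeq : ∀ i, g i = fun ω => Real.exp (-l * (Z i ω - Δ')) * Real.exp (-l * Δ') := by
    intro i; funext ω
    simp only [hgdef, ← Real.exp_add]
    congr 1; ring
  have hgint : ∀ i, Integrable (g i) μ := by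
    intro i
    rw [hgeq i]
    exact ((hsub i (-l)).1).mul_const _
  have hgbd : ∀ i, (∫ ω, g i ω ∂μ) ≤ 1 := by
    intro i
    rw [hgeq i, integral_mul_const]
    have h1 := (hsub i (-l)).2
    calc (∫ ω, Real.exp (-l * (Z i ω - Δ')) ∂μ) * Real.exp (-l * Δ')
        ≤ Real.exp ((-l) ^ 2 / 2) * Real.exp (-l * Δ') :=
          mul_le_mul_of_nonneg_right h1 (Real.exp_pos _).le
      _ = Real.exp ((-l) ^ 2 / 2 + -l * Δ') := (Real.exp_add _ _).symm
      _ ≤ Real.exp 0 := Real.exp_le_exp.mpr (by nlinarith)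
      _ = 1 := Real.exp_zero
  set ε : ℝ := Real.exp (l * a) with hεdef
  have hε : 1 < ε := by
    have h0 : (0 : ℝ) < l * a := by positivity
    calc (1 : ℝ) = Real.exp 0 := Real.exp_zero.symm
      _ < Real.exp (l * a) := Real.exp_lt_exp.mpr h0
  have hbound := fun n => ville_aux Z hmeas hindep l hl g (fun i => rfl) hgint hgbd ε hε n
  have hsubset : {ω | ∃ n : ℕ, 1 ≤ n ∧ (∑ i ∈ Finset.range n, Z i ω) ≤ -a}
      ⊆ ⋃ n, {ω | ∃ k ≤ n, ε ≤ (∏ i ∈ Finset.range k, g i) ω} := by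
    rintro ω ⟨n, hn1, hSn⟩
    refine Set.mem_iUnion.mpr ⟨n, n, le_rfl, ?_⟩
    have hprod : (∏ i ∈ Finset.range n, g i) ω
        = Real.exp (-l * ∑ i ∈ Finset.range n, Z i ω) := by
      rw [Finset.prod_apply]
      simp only [hgdef]
      rw [← Real.exp_sum]
      congr 1
      rw [Finset.mul_sum]
    rw [hprod, hεdef]
    refine Real.exp_le_exp.mpr ?_
    nlinarith
  refine le_trans (measure_mono hsubset) ?_
  have hmono : Monotone (fun n => {ω | ∃ k ≤ n, ε ≤ (∏ i ∈ Finset.range k, g i) ω}) := by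
    rintro i j hij ω ⟨k, hk, h⟩
    exact ⟨k, hk.trans hij, h⟩
  rw [Directed.measure_iUnion hmono.directed_le]
  refine iSup_le fun n => le_trans (hbound n) (le_of_eq ?_)
  congr 1
  rw [one_div, hεdef, ← Real.exp_neg]
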